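/- Let ρ(u) = √(u(4−u))/(2πu) for u ∈ (0,4] (the Marchenko–Pastur density), let L > 0, and define B(κ) = 1 − 2κ + κ·log(1+2κ) for 0 ≤ κ ≤ 1 and B(κ) = −1 + κ·log((2κ+1)/(2κ−1)) for κ > 1. Then lim_{t→0⁺} (1/t)·( L − ∫₀⁴ L·ρ(u)·B( t/(2π·ρ(u)·L) ) du ) = 4/π. -/

import Mathlib

open MeasureTheory Real Filter

/-- The Marchenko–Pastur density `ρ(u) = √(u(4−u))/(2πu)` on `(0, 4]`. -/
noncomputable def rhoMP (u : ℝ) : ℝ :=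
  Real.sqrt (u * (4 - u)) / (2 * Real.pi * u)

/-- The GOE two-level form factor `B(κ)`:
`B(κ) = 1 − 2κ + κ log(1+2κ)` for `0 ≤ κ ≤ 1`, and
`B(κ) = −1 + κ log((2κ+1)/(2κ−1))` for `κ > 1`. -/
noncomputable def Bgoe (κ : ℝ) : ℝ :=
  if κ ≤ 1 then 1 - 2 * κ + κ * Real.log (1 + 2 * κ)
  else -1 + κ * Real.log ((2 * κ + 1) / (2 * κ - 1))

lemma rhoMP_pos {u : ℝ} (hu : u ∈ Set.Ioo (0:ℝ) 4) : 0 < rhoMP u := by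
  obtain ⟨h0, h4⟩ := hu
  unfold rhoMP
  apply div_pos
  · exact Real.sqrt_pos.2 (by nlinarith)
  · positivity

lemma measurable_rhoMP : Measurable rhoMP := by
  exact ((Real.continuous_sqrt.comp (continuous_id.mul (continuous_const.sub continuous_id))).measurable).div
    ((continuous_const.mul continuous_id).measurable)

/-- antiderivative of rhoMP -/
noncomputable def Fmp (u : ℝ) : ℝ :=
  (2 / Real.pi) * Real.arcsin (Real.sqrt u / 2) + Real.sqrt (u * (4 - u)) / (2 * Real.pi)

lemma Fmp_cont : Continuous Fmp := by
  exact (continuous_const.mul (Real.continuous_arcsin.comp (Real.continuous_sqrt.div_const 2))).add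
    ((Real.continuous_sqrt.comp (continuous_id.mul (continuous_const.sub continuous_id))).div_const _)

lemma Fmp_deriv {u : ℝ} (hu : u ∈ Set.Ioo (0:ℝ) 4) : HasDerivAt Fmp (rhoMP u) u := by
  obtain ⟨h0, h4⟩ := hu
  have ha : (0:ℝ) < Real.sqrt u := Real.sqrt_pos.2 h0
  have hb : (0:ℝ) < Real.sqrt (4 - u) := Real.sqrt_pos.2 (by linarith)
  have ha2 : Real.sqrt u ^ 2 = u := Real.sq_sqrt h0.le
  have hb2 : Real.sqrt (4 - u) ^ 2 = 4 - u := Real.sq_sqrt (by linarith)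
  have hsqlt : Real.sqrt u < 2 := by nlinarith
  have h1 : HasDerivAt (fun u : ℝ => Real.sqrt u / 2) (1 / (2 * Real.sqrt u) / 2) u :=
    (Real.hasDerivAt_sqrt h0.ne').div_const 2
  have h2 : HasDerivAt (fun u : ℝ => Real.arcsin (Real.sqrt u / 2))
      ((1 / Real.sqrt (1 - (Real.sqrt u / 2) ^ 2)) * (1 / (2 * Real.sqrt u) / 2)) u := by
    exact (Real.hasDerivAt_arcsin (by nlinarith) (by nlinarith)).comp u h1
  have h3 : HasDerivAt (fun u : ℝ => u * (4 - u)) (4 - 2 * u) u := by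
    have := (hasDerivAt_id u).mul ((hasDerivAt_const u (4:ℝ)).sub (hasDerivAt_id u))
    exact this.congr_deriv (by simp only [Pi.sub_apply, id]; ring)
  have h4' : HasDerivAt (fun u : ℝ => Real.sqrt (u * (4 - u)))
      (1 / (2 * Real.sqrt (u * (4 - u))) * (4 - 2 * u)) u :=
    (Real.hasDerivAt_sqrt (by nlinarith)).comp u h3
  have h5 : HasDerivAt Fmp
      ((2 / Real.pi) * ((1 / Real.sqrt (1 - (Real.sqrt u / 2) ^ 2)) * (1 / (2 * Real.sqrt u) / 2))
        + (1 / (2 * Real.sqrt (u * (4 - u))) * (4 - 2 * u)) / (2 * Real.pi)) u :=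
    ((h2.const_mul _).add (h4'.div_const _))
  convert h5 using 1
  have hab : Real.sqrt (u * (4 - u)) = Real.sqrt u * Real.sqrt (4 - u) :=
    Real.sqrt_mul h0.le _
  have hinner : 1 - (Real.sqrt u / 2) ^ 2 = (Real.sqrt (4 - u) / 2) ^ 2 := by
    rw [div_pow, div_pow, ha2, hb2]; ring
  have hs : Real.sqrt (1 - (Real.sqrt u / 2) ^ 2) = Real.sqrt (4 - u) / 2 := by
    rw [hinner, Real.sqrt_sq (by positivity)]
  rw [hs, hab]
  unfold rhoMP
  rw [hab]
  have hπ : Real.pi ≠ 0 := Real.pi_ne_zero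
  field_simp
  linear_combination 2 * Real.sqrt u^2 * hb2 + 2 * (4 - u) * ha2

lemma rhoMP_integrableOn : IntegrableOn rhoMP (Set.Ioc (0:ℝ) 4) := by
  have hg : IntegrableOn (fun u : ℝ => (1 / Real.pi) * u ^ (-(1/2) : ℝ)) (Set.Ioc (0:ℝ) 4) := by
    have := (intervalIntegral.intervalIntegrable_rpow' (a := 0) (b := 4)
      (r := (-(1/2) : ℝ)) (by norm_num))
    rw [intervalIntegrable_iff_integrableOn_Ioc_of_le (by norm_num)] at this
    exact this.const_mul _
  apply hg.integrable.mono' measurable_rhoMP.aestronglyMeasurable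
  rw [ae_restrict_iff' measurableSet_Ioc]
  filter_upwards with u hu
  obtain ⟨h0, h4⟩ := hu
  have ha : (0:ℝ) < Real.sqrt u := Real.sqrt_pos.2 h0
  have ha2 : Real.sqrt u ^ 2 = u := Real.sq_sqrt h0.le
  have hρ : 0 ≤ rhoMP u := by
    unfold rhoMP; positivity
  rw [Real.norm_of_nonneg hρ]
  have h1 : Real.sqrt (u * (4 - u)) ≤ 2 * Real.sqrt u := by
    rw [show (2:ℝ) * Real.sqrt u = Real.sqrt (4 * u) by
      rw [show (4:ℝ) * u = (2 * Real.sqrt u)^2 by nlinarith]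
      exact (Real.sqrt_sq (by positivity)).symm]
    exact Real.sqrt_le_sqrt (by nlinarith)
  have hrp : u ^ (-(1/2) : ℝ) = 1 / Real.sqrt u := by
    rw [Real.rpow_neg h0.le, Real.sqrt_eq_rpow]
    simp
  unfold rhoMP
  rw [hrp]
  rw [div_le_iff₀ (by positivity)]
  have hπ := Real.pi_pos
  calc Real.sqrt (u * (4 - u)) ≤ 2 * Real.sqrt u := h1
    _ = 1 / Real.pi * (1 / Real.sqrt u) * (2 * Real.pi * u) := by
        field_simp
        nlinarith
  
lemma integral_rhoMP : ∫ u in (0:ℝ)..4, rhoMP u = 1 := by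
  rw [intervalIntegral.integral_eq_sub_of_hasDerivAt_of_le (by norm_num)
    Fmp_cont.continuousOn (fun x hx => Fmp_deriv hx)
    ((intervalIntegrable_iff_integrableOn_Ioc_of_le (by norm_num)).2 rhoMP_integrableOn)]
  unfold Fmp
  rw [show Real.sqrt 4 = 2 by
    rw [show (4:ℝ) = 2^2 by norm_num, Real.sqrt_sq (by norm_num)]]
  simp [Real.arcsin_one]

lemma measurable_Bgoe : Measurable Bgoe := by
  unfold Bgoe
  apply Measurable.ite (measurableSet_le measurable_id measurable_const)
  · exact (measurable_const.sub (measurable_const.mul measurable_id)).add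
      (measurable_id.mul (Real.measurable_log.comp (measurable_const.add (measurable_const.mul measurable_id))))
  · exact measurable_const.add (measurable_id.mul (Real.measurable_log.comp
      (((measurable_const.mul measurable_id).add measurable_const).div
        ((measurable_const.mul measurable_id).sub measurable_const))))

lemma Bgoe_sub_bounds {κ : ℝ} (hκ : 0 < κ) :
    0 ≤ 1 - Bgoe κ ∧ 1 - Bgoe κ ≤ 2 * κ := by
  unfold Bgoe
  by_cases h : κ ≤ 1
  · rw [if_pos h]
    have hl0 : 0 ≤ Real.log (1 + 2 * κ) := Real.log_nonneg (by linarith)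
    have hl2 : Real.log (1 + 2 * κ) ≤ 2 * κ := by
      have := Real.log_le_sub_one_of_pos (x := 1 + 2 * κ) (by linarith)
      linarith
    constructor <;> nlinarith
  · rw [if_neg h]
    push_neg at h
    have hd : (0:ℝ) < 2 * κ - 1 := by linarith
    have hr1 : (1:ℝ) ≤ (2 * κ + 1) / (2 * κ - 1) := by
      rw [le_div_iff₀ hd]; linarith
    have hl0 : 0 ≤ Real.log ((2 * κ + 1) / (2 * κ - 1)) := Real.log_nonneg hr1
    have hl2 : Real.log ((2 * κ + 1) / (2 * κ - 1)) ≤ 2 / (2 * κ - 1) := by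
      have h1 := Real.log_le_sub_one_of_pos (x := (2 * κ + 1) / (2 * κ - 1)) (by linarith)
      have : (2 * κ + 1) / (2 * κ - 1) - 1 = 2 / (2 * κ - 1) := by
        field_simp
        norm_num
      linarith
    have hk2 : κ * Real.log ((2 * κ + 1) / (2 * κ - 1)) ≤ 2 := by
      calc κ * Real.log ((2 * κ + 1) / (2 * κ - 1)) ≤ κ * (2 / (2 * κ - 1)) := by
            exact mul_le_mul_of_nonneg_left hl2 hκ.le
        _ ≤ 2 := by
            rw [mul_div_assoc']
            rw [div_le_iff₀ hd]
            nlinarith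
    constructor <;> nlinarith

lemma abs_term_le {t c : ℝ} (ht : 0 < t) (hc : 0 < c) :
    |(1/t) * (c/(2*Real.pi) - c/(2*Real.pi) * Bgoe (t/c))| ≤ 1/Real.pi := by
  have hκ : 0 < t / c := div_pos ht hc
  obtain ⟨h1, h2⟩ := Bgoe_sub_bounds hκ
  have hπ := Real.pi_pos
  have heq : (1/t) * (c/(2*Real.pi) - c/(2*Real.pi) * Bgoe (t/c))
      = (c/(2*Real.pi*t)) * (1 - Bgoe (t/c)) := by ring
  rw [heq, abs_of_nonneg (by positivity)]
  calc (c/(2*Real.pi*t)) * (1 - Bgoe (t/c)) ≤ (c/(2*Real.pi*t)) * (2*(t/c)) :=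
        mul_le_mul_of_nonneg_left h2 (by positivity)
    _ = 1/Real.pi := by field_simp

lemma tendsto_term {c : ℝ} (hc : 0 < c) :
    Tendsto (fun t => (1/t) * (c/(2*Real.pi) - c/(2*Real.pi) * Bgoe (t/c)))
      (nhdsWithin 0 (Set.Ioi 0)) (nhds (1/Real.pi)) := by
  have hcont : ContinuousAt (fun t : ℝ => (2 - Real.log (1 + 2 * (t / c))) / (2*Real.pi)) 0 := by
    apply ContinuousAt.div_const
    apply ContinuousAt.sub continuousAt_const
    have hinner : ContinuousAt (fun t : ℝ => 1 + 2 * (t / c)) 0 := by fun_prop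
    exact (Real.continuousAt_log (by norm_num)).comp hinner
  have hlim : Tendsto (fun t : ℝ => (2 - Real.log (1 + 2 * (t / c))) / (2*Real.pi))
      (nhdsWithin 0 (Set.Ioi 0)) (nhds (1/Real.pi)) := by
    have h2 := hcont.continuousWithinAt (s := Set.Ioi (0:ℝ)) |>.tendsto
    have : ((2:ℝ) - Real.log (1 + 2 * (0 / c))) / (2*Real.pi) = 1/Real.pi := by
      rw [div_eq_div_iff (by positivity) (by positivity)]
      simp
    rwa [this] at h2
  apply hlim.congr'
  filter_upwards [Ioo_mem_nhdsGT hc]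
    with t ht
  obtain ⟨ht0, htc⟩ := ht
  have hκ1 : t / c ≤ 1 := by
    rw [div_le_one hc]; linarith
  unfold Bgoe
  rw [if_pos hκ1]
  have hπ := Real.pi_pos
  field_simp
  ring


/-- Early-time slope of the refined connected two-point form factor of the LOE:
`lim_{t→0⁺} (1/t)(L − ∫₀⁴ Lρ(u) B(t/(2πρ(u)L)) du) = 4/π`. -/
theorem loe_refined_form_factor_slope (L : ℝ) (hL : 0 < L) :
    Tendsto (fun t : ℝ =>
        (1 / t) * (L - ∫ u in (0:ℝ)..4, L * rhoMP u * Bgoe (t / (2 * Real.pi * rhoMP u * L))))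
      (nhdsWithin 0 (Set.Ioi 0)) (nhds (4 / Real.pi)) := by
  have hπ := Real.pi_pos
  have hae : ∀ᵐ u ∂(volume.restrict (Set.Ioc (0:ℝ) 4)), u ∈ Set.Ioo (0:ℝ) 4 := by
    have h1 : ∀ᵐ u : ℝ, u ≠ 4 := by
      rw [ae_iff]
      have : {u : ℝ | ¬ u ≠ 4} = {4} := by ext x; simp
      rw [this]
      exact Real.volume_singleton
    filter_upwards [ae_restrict_mem measurableSet_Ioc, ae_restrict_of_ae h1] with u hu h4
    exact ⟨hu.1, lt_of_le_of_ne hu.2 h4⟩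
  have hrw : ∀ u : ℝ, L * rhoMP u = (2 * Real.pi * rhoMP u * L) / (2 * Real.pi) := by
    intro u; field_simp
  have hmeas : ∀ t : ℝ, Measurable (fun u : ℝ =>
      (1 / t) * (L * rhoMP u - L * rhoMP u * Bgoe (t / (2 * Real.pi * rhoMP u * L)))) := by
    intro t
    apply Measurable.const_mul
    apply Measurable.sub
    · exact measurable_const.mul measurable_rhoMP
    · exact (measurable_const.mul measurable_rhoMP).mul (measurable_Bgoe.comp
        (measurable_const.div ((measurable_const.mul measurable_rhoMP).mul measurable_const)))
  have key : Tendsto (fun t : ℝ => ∫ u in Set.Ioc (0:ℝ) 4,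
      (1 / t) * (L * rhoMP u - L * rhoMP u * Bgoe (t / (2 * Real.pi * rhoMP u * L))))
      (nhdsWithin 0 (Set.Ioi 0))
      (nhds (∫ _u in Set.Ioc (0:ℝ) 4, (1 / Real.pi : ℝ))) := by
    apply tendsto_integral_filter_of_dominated_convergence (fun _ => (1 / Real.pi : ℝ))
    · filter_upwards with t
      exact (hmeas t).aestronglyMeasurable
    · filter_upwards [self_mem_nhdsWithin] with t ht
      filter_upwards [hae] with u hu
      have hρ := rhoMP_pos hu
      have hc : 0 < 2 * Real.pi * rhoMP u * L := by positivity
      rw [Real.norm_eq_abs, hrw u]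
      exact abs_term_le ht hc
    · refine integrableOn_const ?_
      rw [Real.volume_Ioc]
      exact ENNReal.ofReal_ne_top
    · filter_upwards [hae] with u hu
      have hρ := rhoMP_pos hu
      have hc : 0 < 2 * Real.pi * rhoMP u * L := by positivity
      simp only [hrw u]
      exact tendsto_term hc
  have hconst : (∫ _u in Set.Ioc (0:ℝ) 4, (1 / Real.pi : ℝ)) = 4 / Real.pi := by
    rw [setIntegral_const, Real.volume_real_Ioc, smul_eq_mul,
      max_eq_left (by norm_num : (0:ℝ) ≤ 4 - 0)]
    ring
  rw [hconst] at key
  refine key.congr' ?_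
  filter_upwards [self_mem_nhdsWithin] with t ht
  have hintρ : Integrable (fun u => L * rhoMP u) (volume.restrict (Set.Ioc (0:ℝ) 4)) :=
    rhoMP_integrableOn.const_mul L
  have hintB : Integrable (fun u => L * rhoMP u * Bgoe (t / (2 * Real.pi * rhoMP u * L)))
      (volume.restrict (Set.Ioc (0:ℝ) 4)) := by
    apply Integrable.mono' (g := fun u => L * rhoMP u + t / Real.pi)
      (hintρ.add (integrableOn_const (by rw [Real.volume_Ioc]; exact ENNReal.ofReal_ne_top)))
    · exact ((measurable_const.mul measurable_rhoMP).mul (measurable_Bgoe.comp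
        (measurable_const.div ((measurable_const.mul measurable_rhoMP).mul measurable_const)))).aestronglyMeasurable
    · filter_upwards [hae] with u hu
      have hρ := rhoMP_pos hu
      have hc : 0 < 2 * Real.pi * rhoMP u * L := by positivity
      have hκ : 0 < t / (2 * Real.pi * rhoMP u * L) := div_pos ht hc
      obtain ⟨h1, h2⟩ := Bgoe_sub_bounds hκ
      have habs : |Bgoe (t / (2 * Real.pi * rhoMP u * L))| ≤ 1 + 2 * (t / (2 * Real.pi * rhoMP u * L)) := by
        rw [abs_le]; constructor <;> nlinarith
      rw [Real.norm_eq_abs, abs_mul, abs_of_nonneg (by positivity : (0:ℝ) ≤ L * rhoMP u)]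
      calc L * rhoMP u * |Bgoe (t / (2 * Real.pi * rhoMP u * L))|
          ≤ L * rhoMP u * (1 + 2 * (t / (2 * Real.pi * rhoMP u * L))) :=
            mul_le_mul_of_nonneg_left habs (by positivity)
        _ = L * rhoMP u + t / Real.pi := by field_simp
  have hLint : (∫ u in Set.Ioc (0:ℝ) 4, L * rhoMP u) = L := by
    rw [integral_const_mul, ← intervalIntegral.integral_of_le (by norm_num : (0:ℝ) ≤ 4),
      integral_rhoMP, mul_one]
  rw [intervalIntegral.integral_of_le (by norm_num : (0:ℝ) ≤ 4),
    integral_const_mul, integral_sub hintρ hintB, hLint]
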